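/- Let Ω₁, Ω₂ ⊆ ℝⁿ be closed sets, F : Ω₁ → Ω₂ Lipschitz continuous with constant L_F, S : Ω₂ → Ω₁ Lipschitz continuous with constant L_S, with L_S·L_F < 1, and let x* ∈ Ω₁ be a fixed point of S∘F. Let (x^k) ⊆ Ω₁, (ε_k), (δ_k) ⊆ ℝⁿ satisfy F(x^k) + ε_k ∈ Ω₂ and x^{k+1} = S(F(x^k) + ε_k) + δ_k for all k ≥ 0. Then for every k ≥ 0, ‖x^{k+1} − x*‖ ≤ (L_S·L_F)^{k+1}·‖x⁰ − x*‖ + Σ_{j=0}^{k} L_S^{j+1}·L_F^{j}·‖ε_{k−j}‖ + Σ_{j=0}^{k} (L_S·L_F)^{j}·‖δ_{k−j}‖. -/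

import Mathlib

theorem nested_perturbed_accumulated_bound
    {n : ℕ} (Ω₁ Ω₂ : Set (EuclideanSpace ℝ (Fin n)))
    (hΩ₁ : IsClosed Ω₁) (hΩ₂ : IsClosed Ω₂)
    (F S : EuclideanSpace ℝ (Fin n) → EuclideanSpace ℝ (Fin n))
    (hFmap : ∀ x ∈ Ω₁, F x ∈ Ω₂) (hSmap : ∀ x ∈ Ω₂, S x ∈ Ω₁)
    (LF LS : ℝ) (hLF0 : 0 ≤ LF) (hLS0 : 0 ≤ LS) (hLL : LS * LF < 1)
    (hFlip : ∀ x ∈ Ω₁, ∀ y ∈ Ω₁, ‖F x - F y‖ ≤ LF * ‖x - y‖)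
    (hSlip : ∀ x ∈ Ω₂, ∀ y ∈ Ω₂, ‖S x - S y‖ ≤ LS * ‖x - y‖)
    (xstar : EuclideanSpace ℝ (Fin n)) (hxstarΩ : xstar ∈ Ω₁)
    (hfix : S (F xstar) = xstar)
    (x ε δ : ℕ → EuclideanSpace ℝ (Fin n))
    (hxΩ : ∀ k, x k ∈ Ω₁)
    (hFxΩ : ∀ k, F (x k) + ε k ∈ Ω₂)
    (hiter : ∀ k, x (k + 1) = S (F (x k) + ε k) + δ k)
    :
    ∀ k, ‖x (k + 1) - xstar‖ ≤
      (LS * LF) ^ (k + 1) * ‖x 0 - xstar‖ +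
        ∑ j ∈ Finset.range (k + 1), LS ^ (j + 1) * LF ^ j * ‖ε (k - j)‖ +
        ∑ j ∈ Finset.range (k + 1), (LS * LF) ^ j * ‖δ (k - j)‖ := by
  have step : ∀ k, ‖x (k + 1) - xstar‖ ≤
      LS * LF * ‖x k - xstar‖ + LS * ‖ε k‖ + ‖δ k‖ := by
    intro k
    have h1 : x (k + 1) - xstar = (S (F (x k) + ε k) - S (F xstar)) + δ k := by
      rw [hiter k, hfix]; abel
    have h2 : ‖S (F (x k) + ε k) - S (F xstar)‖ ≤ LS * ‖F (x k) + ε k - F xstar‖ :=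
      hSlip _ (hFxΩ k) _ (hFmap _ hxstarΩ)
    have h3 : ‖F (x k) + ε k - F xstar‖ ≤ LF * ‖x k - xstar‖ + ‖ε k‖ := by
      have : F (x k) + ε k - F xstar = (F (x k) - F xstar) + ε k := by abel
      rw [this]
      exact le_trans (norm_add_le _ _)
        (add_le_add_left (hFlip _ (hxΩ k) _ hxstarΩ) _)
    calc ‖x (k + 1) - xstar‖ ≤ ‖S (F (x k) + ε k) - S (F xstar)‖ + ‖δ k‖ := by
          rw [h1]; exact norm_add_le _ _
      _ ≤ LS * (LF * ‖x k - xstar‖ + ‖ε k‖) + ‖δ k‖ := by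
          gcongr
          exact h2.trans (by gcongr)
      _ = LS * LF * ‖x k - xstar‖ + LS * ‖ε k‖ + ‖δ k‖ := by ring
  intro k
  induction k with
  | zero => simpa using step 0
  | succ k ih =>
      have h := step (k + 1)
      have hmul : LS * LF * ‖x (k + 1) - xstar‖ ≤ LS * LF *
          ((LS * LF) ^ (k + 1) * ‖x 0 - xstar‖ +
            ∑ j ∈ Finset.range (k + 1), LS ^ (j + 1) * LF ^ j * ‖ε (k - j)‖ +
            ∑ j ∈ Finset.range (k + 1), (LS * LF) ^ j * ‖δ (k - j)‖) := by
        exact mul_le_mul_of_nonneg_left ih (by positivity)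
      have hε : ∑ j ∈ Finset.range (k + 2), LS ^ (j + 1) * LF ^ j * ‖ε (k + 1 - j)‖ =
          LS * LF * ∑ j ∈ Finset.range (k + 1), LS ^ (j + 1) * LF ^ j * ‖ε (k - j)‖
            + LS * ‖ε (k + 1)‖ := by
        rw [Finset.sum_range_succ', Finset.mul_sum]
        simp only [pow_succ, pow_zero]
        congr 1
        · apply Finset.sum_congr rfl
          intro j hj
          have : k + 1 - (j + 1) = k - j := by omega
          rw [this]; ring
        · simp
      have hδ : ∑ j ∈ Finset.range (k + 2), (LS * LF) ^ j * ‖δ (k + 1 - j)‖ =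
          LS * LF * ∑ j ∈ Finset.range (k + 1), (LS * LF) ^ j * ‖δ (k - j)‖
            + ‖δ (k + 1)‖ := by
        rw [Finset.sum_range_succ', Finset.mul_sum]
        simp only [pow_succ, pow_zero]
        congr 1
        · apply Finset.sum_congr rfl
          intro j hj
          have : k + 1 - (j + 1) = k - j := by omega
          rw [this]; ring
        · simp
      rw [hε, hδ]
      calc ‖x (k + 1 + 1) - xstar‖ ≤ LS * LF * ‖x (k + 1) - xstar‖ + LS * ‖ε (k + 1)‖ + ‖δ (k + 1)‖ := h
        _ ≤ LS * LF * ((LS * LF) ^ (k + 1) * ‖x 0 - xstar‖ +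
            ∑ j ∈ Finset.range (k + 1), LS ^ (j + 1) * LF ^ j * ‖ε (k - j)‖ +
            ∑ j ∈ Finset.range (k + 1), (LS * LF) ^ j * ‖δ (k - j)‖) + LS * ‖ε (k + 1)‖ + ‖δ (k + 1)‖ := by
            gcongr
        _ = (LS * LF) ^ (k + 1 + 1) * ‖x 0 - xstar‖ +
            (LS * LF * ∑ j ∈ Finset.range (k + 1), LS ^ (j + 1) * LF ^ j * ‖ε (k - j)‖ + LS * ‖ε (k + 1)‖) +
            (LS * LF * ∑ j ∈ Finset.range (k + 1), (LS * LF) ^ j * ‖δ (k - j)‖ + ‖δ (k + 1)‖) := by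
            ring
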